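/- Let m, s, z ≥ 1 and let 𝒞 be the class of Boolean functions f : {0,1}^m → {0,1} expressible as a disjunction f = M_1 ∨ … ∨ M_s of s monotone monomials, each M_i nonempty and a conjunction of at most z unnegated variables. In the dynamic minimum-distance model, where the contrast set in round t is the minimum-distance contrast set with respect to the version-space distance d_{𝒞_t}(x, x') = |{ C ∈ 𝒞_t : C(x) ≠ C(x') }| / |𝒞_t| (𝒞_t being the version space entering round t), the contrast sample complexity of 𝒞 is at most s. -/

import Mathlib

open scoped NNReal

/-- The interaction game for learning from a contrast oracle:
`Identifiable pt CS n V` holds iff the learner can guarantee, within at most `n` rounds,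
that the version space (starting from `V`) becomes a singleton `{C*}` (i.e. a subsingleton,
since the target always stays in the version space), against every target `C* ∈ V` and
every adversarial choice of contrastive examples from the contrast set `CS`.
A query has type `Q`; `pt q` is the instance whose label is returned; `CS q C V` is the
contrast set of the query `q` w.r.t. concept `C` and current version space `V`. -/
def Identifiable {X Q : Type*} (pt : Q → X)
    (CS : Q → (X → Bool) → Set (X → Bool) → Set X) :
    ℕ → Set (X → Bool) → Prop
  | 0, V => V.Subsingleton
  | n + 1, V =>
      V.Subsingleton ∨
        ∃ q : Q, ∀ Cstar ∈ V,
          ((CS q Cstar V = ∅ →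
            Identifiable pt CS n
              {C ∈ V | C (pt q) = Cstar (pt q) ∧ CS q C V = ∅}) ∧
          (∀ x' ∈ CS q Cstar V,
            Identifiable pt CS n
              {C ∈ V | C (pt q) = Cstar (pt q) ∧ x' ∈ CS q C V ∧ C x' = Cstar x'}))

/-- The contrast sample complexity of class `𝓒` (as an extended natural number):
the least `n` such that some learner identifies every target within `n` rounds. -/
noncomputable def sampleComplexity {X Q : Type*} (pt : Q → X)
    (CS : Q → (X → Bool) → Set (X → Bool) → Set X) (𝓒 : Set (X → Bool)) : ℕ∞ :=
  sInf {n : ℕ∞ | ∃ k : ℕ, n = (k : ℕ∞) ∧ Identifiable pt CS k 𝓒}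

/-- Minimum-distance contrast set: points of opposite label at minimal `d`-distance. -/
def CSmin {X : Type*} (d : X → X → ℝ≥0) (x : X) (C : X → Bool) : Set X :=
  {x' | C x' ≠ C x ∧ ∀ x'' : X, C x'' ≠ C x → d x x' ≤ d x x''}

/-- Sample complexity in the minimum-distance model. -/
noncomputable def Smin {X : Type*} (d : X → X → ℝ≥0) (𝓒 : Set (X → Bool)) : ℕ∞ :=
  sampleComplexity (id : X → X) (fun x C _ => CSmin d x C) 𝓒

/-- Proximity contrast set: points of opposite label within distance `r` of `x`. -/
def CSprox {X : Type*} (d : X → X → ℝ≥0) (x : X) (r : ℝ≥0) (C : X → Bool) : Set X :=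
  {x' | C x' ≠ C x ∧ d x x' ≤ r}

/-- Sample complexity in the proximity model (queries are pairs `(x, r)`). -/
noncomputable def Sprox {X : Type*} (d : X → X → ℝ≥0) (𝓒 : Set (X → Bool)) : ℕ∞ :=
  sampleComplexity (Prod.fst : X × ℝ≥0 → X) (fun q C _ => CSprox d q.1 q.2 C) 𝓒

/-- Membership-query complexity: the contrast sets are always empty,
so the oracle only ever returns the label of the queried point. -/
noncomputable def SMQ {X : Type*} (𝓒 : Set (X → Bool)) : ℕ∞ :=
  sampleComplexity (id : X → X) (fun _ _ _ => (∅ : Set X)) 𝓒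

/-- `MDNF` with nonempty monomials: Boolean functions over `{0,1}^m` expressible as a
disjunction of `s` monotone monomials, each nonempty and with at most `z` variables. -/
def MDNFne (m s z : ℕ) : Set ((Fin m → Bool) → Bool) :=
  {f | ∃ M : Fin s → Finset (Fin m), (∀ i, (M i).Nonempty ∧ (M i).card ≤ z) ∧
    f = fun b => decide (∃ i, ∀ j ∈ M i, b j = true)}

/-- The version-space distance: `d_V(x, x')` is the fraction of concepts of `V` that
label `x` and `x'` differently. -/
noncomputable def dVS {X : Type*} (V : Set (X → Bool)) (x x' : X) : ℝ≥0 :=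
  (({C ∈ V | C x ≠ C x'}).ncard : ℝ≥0) / (V.ncard : ℝ≥0)

/-- Sample complexity in the dynamic minimum-distance model: in each round the
contrast set is the minimum-distance contrast set w.r.t. the distance `dVS V`
induced by the current version space `V`. -/
noncomputable def SminDyn {X : Type*} (𝓒 : Set (X → Bool)) : ℕ∞ :=
  sampleComplexity (id : X → X) (fun x C V => CSmin (dVS V) x C) 𝓒


section S18aux
open scoped Classical

variable {m s z : ℕ}

/-- characteristic vector of a set of coordinates -/
def chi (S : Finset (Fin m)) : Fin m → Bool := fun j => decide (j ∈ S)

/-- evaluation of a monotone DNF given by monomials `M` -/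
def evalM (M : Fin s → Finset (Fin m)) : (Fin m → Bool) → Bool :=
  fun b => decide (∃ i, ∀ j ∈ M i, b j = true)

lemma evalM_mono (M : Fin s → Finset (Fin m)) {b b' : Fin m → Bool}
    (h : ∀ j, b j = true → b' j = true) (hb : evalM M b = true) : evalM M b' = true := by
  simp only [evalM, decide_eq_true_eq] at *
  obtain ⟨i, hi⟩ := hb
  exact ⟨i, fun j hj => h j (hi j hj)⟩

lemma evalM_chi (M : Fin s → Finset (Fin m)) (i : Fin s) :
    evalM M (chi (M i)) = true := by
  simp only [evalM, decide_eq_true_eq]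
  exact ⟨i, fun j hj => by simp [chi, hj]⟩

lemma evalM_zero (M : Fin s → Finset (Fin m)) (hne : ∀ i, (M i).Nonempty) :
    evalM M (fun _ => false) = false := by
  simp only [evalM, decide_eq_false_iff_not]
  rintro ⟨i, hi⟩
  obtain ⟨j, hj⟩ := hne i
  simpa using hi j hj

lemma evalM_one (hs : 1 ≤ s) (M : Fin s → Finset (Fin m)) :
    evalM M (fun _ => true) = true := by
  simp only [evalM, decide_eq_true_eq]
  exact ⟨⟨0, hs⟩, fun j _ => trivial⟩

/-- every concept in the class vanishes at the all-zeros point -/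
lemma mem_zero_false {C : (Fin m → Bool) → Bool} (hC : C ∈ MDNFne m s z) :
    C (fun _ => false) = false := by
  obtain ⟨M, hM, rfl⟩ := hC
  exact evalM_zero M (fun i => (hM i).1)

lemma mem_mono {C : (Fin m → Bool) → Bool} (hC : C ∈ MDNFne m s z)
    {b b' : Fin m → Bool} (h : ∀ j, b j = true → b' j = true)
    (hb : C b = true) : C b' = true := by
  obtain ⟨M, _, rfl⟩ := hC
  exact evalM_mono M h hb

/-- subsingleton version spaces are always identifiable -/
lemma identifiable_of_subsingleton {X Q : Type*} (pt : Q → X)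
    (CS : Q → (X → Bool) → Set (X → Bool) → Set X) :
    ∀ (n : ℕ) (V : Set (X → Bool)), V.Subsingleton → Identifiable pt CS n V
  | 0, _, h => h
  | _ + 1, _, h => Or.inl h

/-- the minimum-distance contrast set is nonempty whenever a point of opposite
label exists -/
lemma csmin_nonempty {X : Type*} [Fintype X] (d : X → X → ℝ≥0) (x : X)
    (C : X → Bool) (h : ∃ x', C x' ≠ C x) : (CSmin d x C).Nonempty := by
  classical
  obtain ⟨x0, hx0⟩ := h
  have hT : (Finset.univ.filter (fun x' => C x' ≠ C x)).Nonempty :=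
    ⟨x0, by simpa using hx0⟩
  obtain ⟨x', hx', hmin⟩ := Finset.exists_min_image _ (d x) hT
  refine ⟨x', ?_, fun x'' hx'' => hmin x'' ?_⟩
  · simpa using hx'
  · simpa using hx''

/-- the count of concepts of `V` labeling `a` positively -/
noncomputable def cnt (V : Set ((Fin m → Bool) → Bool)) (a : Fin m → Bool) : ℕ :=
  {C ∈ V | C a = true}.ncard

lemma dVS_zero_eq {V : Set ((Fin m → Bool) → Bool)}
    (h0 : ∀ C ∈ V, C (fun _ => false) = false) (a : Fin m → Bool) :
    dVS V (fun _ => false) a = (cnt V a : ℝ≥0) / (V.ncard : ℝ≥0) := by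
  have : {C ∈ V | C (fun _ => false) ≠ C a} = {C ∈ V | C a = true} := by
    ext C
    simp only [Set.mem_setOf_eq, Set.mem_sep_iff]
    constructor
    · rintro ⟨hCV, hne⟩
      refine ⟨hCV, ?_⟩
      rw [h0 C hCV] at hne
      simpa using hne.symm
    · rintro ⟨hCV, ht⟩
      exact ⟨hCV, by rw [h0 C hCV, ht]; simp⟩
  rw [dVS, this]; rfl

lemma dVS_zero_le_iff {V : Set ((Fin m → Bool) → Bool)}
    (h0 : ∀ C ∈ V, C (fun _ => false) = false) (hne : V.Nonempty)
    (a b : Fin m → Bool) :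
    dVS V (fun _ => false) a ≤ dVS V (fun _ => false) b ↔ cnt V a ≤ cnt V b := by
  have hpos : (0 : ℝ≥0) < (V.ncard : ℝ≥0) := by
    have := Set.ncard_pos (s := V) (Set.toFinite V)
    exact_mod_cast this.mpr hne
  rw [dVS_zero_eq h0 a, dVS_zero_eq h0 b, div_le_div_iff_of_pos_right hpos,
    Nat.cast_le]

lemma cnt_le_of_subset {V : Set ((Fin m → Bool) → Bool)}
    {a b : Fin m → Bool} (hsub : V ⊆ MDNFne m s z)
    (hab : ∀ j, a j = true → b j = true) : cnt V a ≤ cnt V b := by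
  apply Set.ncard_le_ncard _ (Set.toFinite _)
  rintro C ⟨hCV, hCa⟩
  exact ⟨hCV, mem_mono (hsub hCV) hab hCa⟩

end S18aux


/-- Main induction: if every concept of the version space `V ⊆ MDNFne m s z` has a
representation in which at most `n` monomials are not positively labeled by the whole
version space, then `V` is identifiable in `n` rounds in the dynamic min-distance model. -/
lemma main18 (m s z : ℕ) (hs : 1 ≤ s) :
    ∀ (n : ℕ) (V : Set ((Fin m → Bool) → Bool)), V ⊆ MDNFne m s z →
    (∀ C ∈ V, ∃ M : Fin s → Finset (Fin m),
      (∀ i, (M i).Nonempty ∧ (M i).card ≤ z) ∧ C = evalM M ∧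
      {i : Fin s | ∃ C' ∈ V, C' (chi (M i)) = false}.ncard ≤ n) →
    Identifiable (id : (Fin m → Bool) → (Fin m → Bool))
      (fun x C V => CSmin (dVS V) x C) n V := by
  intro n
  induction n with
  | zero =>
    intro V hsub hrep
    have key : ∀ D ∈ V, ∀ D' ∈ V, ∀ b, D b = true → D' b = true := by
      intro D hD D' hD' b hb
      obtain ⟨M, hMnz, hDeq, hcard⟩ := hrep D hD
      have hempty : {i : Fin s | ∃ C' ∈ V, C' (chi (M i)) = false} = ∅ :=
        Set.ncard_eq_zero (Set.toFinite _) |>.mp (Nat.le_zero.mp hcard)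
      have hb' : evalM M b = true := hDeq ▸ hb
      simp only [evalM, decide_eq_true_eq] at hb'
      obtain ⟨i, hi⟩ := hb'
      have hnot : i ∉ ({i : Fin s | ∃ C' ∈ V, C' (chi (M i)) = false}) := by
        rw [hempty]; exact Set.notMem_empty i
      have hDt : D' (chi (M i)) = true := by
        rcases Bool.eq_false_or_eq_true (D' (chi (M i))) with h | h
        · exact h
        · exact absurd ⟨D', hD', h⟩ hnot
      exact mem_mono (hsub hD') (fun j hj => hi j (by simpa [chi] using hj)) hDt
    intro C hC C' hC'
    funext b
    have h1 := key C hC C' hC' b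
    have h2 := key C' hC' C hC b
    rcases Bool.eq_false_or_eq_true (C b) with hcb | hcb <;>
      rcases Bool.eq_false_or_eq_true (C' b) with hcb' | hcb'
    · rw [hcb, hcb']
    · exact absurd (h1 hcb) (by simp [hcb'])
    · exact absurd (h2 hcb') (by simp [hcb])
    · rw [hcb, hcb']
  | succ n IH =>
    intro V hsub hrep
    refine Or.inr ⟨(fun _ => false : Fin m → Bool), ?_⟩
    intro Cstar hCstar
    have h0 : ∀ C ∈ V, C (fun _ => false) = false := fun C hC => mem_zero_false (hsub hC)
    have hCstar1 : Cstar (fun _ => true) = true := by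
      obtain ⟨M, hM, rfl⟩ := hsub hCstar
      exact evalM_one hs M
    constructor
    · intro hemp
      exfalso
      have hnN := csmin_nonempty (dVS V) (fun _ => false) Cstar
        ⟨(fun _ => true), by rw [hCstar1, h0 Cstar hCstar]; simp⟩
      have hemp' : CSmin (dVS V) (fun _ => false) Cstar = ∅ := hemp
      rw [hemp'] at hnN
      exact Set.not_nonempty_empty hnN
    · intro x' hx'
      obtain ⟨hx'ne, hx'min⟩ := hx'
      have hCsx' : Cstar x' = true := by
        rw [h0 Cstar hCstar] at hx'ne
        simpa using hx'ne
      by_cases hall : ∀ C'' ∈ V, C'' x' = true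
      · -- every concept is already positive at x' : the version space collapses
        apply identifiable_of_subsingleton
        have hx'cnt : cnt V x' = V.ncard := by
          unfold cnt
          congr 1
          ext C
          exact ⟨fun h => h.1, fun h => ⟨h, hall C h⟩⟩
        have key : ∀ D, D ∈
            {C ∈ V | C (id (fun _ => false)) = Cstar (id (fun _ => false)) ∧
              x' ∈ CSmin (dVS V) (fun _ => false) C ∧ C x' = Cstar x'} →
            ∀ b, D b = true → ∀ D' ∈ V, D' b = true := by
          rintro D ⟨hDV, hDz, ⟨hDne, hDmin⟩, hDx'⟩ b hb D' hD'
          have hbne : D b ≠ D (fun _ => false) := by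
            rw [h0 D hDV, hb]; simp
          have hle := hDmin b hbne
          rw [dVS_zero_le_iff h0 ⟨Cstar, hCstar⟩] at hle
          rw [hx'cnt] at hle
          have heq : {C ∈ V | C b = true} = V :=
            Set.eq_of_subset_of_ncard_le (fun C hC => hC.1) hle (Set.toFinite _)
          have hmem : D' ∈ {C ∈ V | C b = true} := by rw [heq]; exact hD'
          exact hmem.2
        intro C hC C' hC'
        funext b
        have h1 := fun hb => key C hC b hb C' (hC'.1)
        have h2 := fun hb => key C' hC' b hb C (hC.1)
        rcases Bool.eq_false_or_eq_true (C b) with hcb | hcb <;>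
          rcases Bool.eq_false_or_eq_true (C' b) with hcb' | hcb'
        · rw [hcb, hcb']
        · exact absurd (h1 hcb) (by simp [hcb'])
        · exact absurd (h2 hcb') (by simp [hcb])
        · rw [hcb, hcb']
      · -- some concept is negative at x' : a new monomial becomes shared
        push_neg at hall
        obtain ⟨C0, hC0V, hC0x'⟩ := hall
        have hC0f : C0 x' = false := by
          rcases Bool.eq_false_or_eq_true (C0 x') with h | h
          · exact absurd h hC0x'
          · exact h
        apply IH
        · exact fun C hC => hsub hC.1
        · rintro C ⟨hCV, hCz, ⟨hCne, hCmin⟩, hCx'⟩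
          obtain ⟨M, hMprop, hCeq, hcard⟩ := hrep C hCV
          have hCx't : C x' = true := by rw [hCx', hCsx']
          have hev : evalM M x' = true := hCeq ▸ hCx't
          simp only [evalM, decide_eq_true_eq] at hev
          obtain ⟨i₀, hi₀⟩ := hev
          refine ⟨M, hMprop, hCeq, ?_⟩
          have hchile : ∀ j, chi (M i₀) j = true → x' j = true :=
            fun j hj => hi₀ j (by simpa [chi] using hj)
          have hBA : cnt V x' ≤ cnt V (chi (M i₀)) := by
            have hCchi : C (chi (M i₀)) = true := hCeq ▸ evalM_chi M i₀
            have hne' : C (chi (M i₀)) ≠ C (fun _ => false) := by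
              rw [h0 C hCV, hCchi]; simp
            have := hCmin _ hne'
            rwa [dVS_zero_le_iff h0 ⟨Cstar, hCstar⟩] at this
          have hset : {C'' ∈ V | C'' (chi (M i₀)) = true} = {C'' ∈ V | C'' x' = true} :=
            Set.eq_of_subset_of_ncard_le
              (fun C'' hC'' => ⟨hC''.1, mem_mono (hsub hC''.1) hchile hC''.2⟩)
              hBA (Set.toFinite _)
          have hi₀mem : i₀ ∈ {i : Fin s | ∃ C' ∈ V, C' (chi (M i)) = false} := by
            refine ⟨C0, hC0V, ?_⟩
            rcases Bool.eq_false_or_eq_true (C0 (chi (M i₀))) with h | h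
            · exfalso
              have : C0 ∈ {C'' ∈ V | C'' x' = true} := hset ▸ (⟨hC0V, h⟩ :
                  C0 ∈ {C'' ∈ V | C'' (chi (M i₀)) = true})
              rw [this.2] at hC0f
              exact Bool.noConfusion hC0f
            · exact h
          have hsubset' :
              {i : Fin s | ∃ C' ∈
                {C ∈ V | C (id (fun _ => false)) = Cstar (id (fun _ => false)) ∧
                  x' ∈ CSmin (dVS V) (fun _ => false) C ∧ C x' = Cstar x'},
                C' (chi (M i)) = false} ⊆
              {i : Fin s | ∃ C' ∈ V, C' (chi (M i)) = false} \ {i₀} := by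
            rintro i ⟨C', hC'V', hC'f⟩
            refine ⟨⟨C', hC'V'.1, hC'f⟩, ?_⟩
            simp only [Set.mem_singleton_iff]
            intro hii
            rw [hii] at hC'f
            have hC'x : C' x' = true := by rw [hC'V'.2.2.2, hCsx']
            have : C' ∈ {C'' ∈ V | C'' (chi (M i₀)) = true} :=
              hset.symm ▸ (⟨hC'V'.1, hC'x⟩ : C' ∈ {C'' ∈ V | C'' x' = true})
            rw [this.2] at hC'f
            exact Bool.noConfusion hC'f
          have hle := Set.ncard_le_ncard hsubset' (Set.toFinite _)
          rw [Set.ncard_diff_singleton_of_mem hi₀mem] at hle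
          exact hle.trans (Nat.sub_le_iff_le_add.mpr hcard)

/-- For `m, s, z ≥ 1`, the class of disjunctions of `s` nonempty
monotone monomials with at most `z` variables each has sample complexity at most `s`
in the dynamic minimum-distance model. -/
theorem statement18 (m s z : ℕ) (hm : 1 ≤ m) (hs : 1 ≤ s) (hz : 1 ≤ z) :
    SminDyn (MDNFne m s z) ≤ (s : ℕ∞) := by
  have h := main18 m s z hs s (MDNFne m s z) subset_rfl ?_
  · exact sInf_le ⟨s, rfl, h⟩
  · intro C hC
    obtain ⟨M, hM, hfeq⟩ := hC
    refine ⟨M, hM, hfeq, ?_⟩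
    have hle := Set.ncard_le_ncard (Set.subset_univ
      {i : Fin s | ∃ C' ∈ MDNFne m s z, C' (chi (M i)) = false}) Set.finite_univ
    simpa [Set.ncard_univ] using hle
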